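/- Let n ≥ 2, let A = {a ∈ ℝ^n : a_i ≥ 0 for all i and Σ_i a_i ≤ 1} be the set of sub-probability vectors over n non-null assignments (the remaining probability goes to a null assignment of value zero), and let θ ∈ ℝ^n have pairwise distinct and nonzero coordinates. Let F be the set of all implementable-with-payments rules f : ℝ^n → A. Then H(θ, F) = {λθ : λ ∈ ℝ, λ ≤ 1}: in the presence of a zero-valued null assignment, the only harmless types for all truthful-in-expectation mechanisms are the scalings of θ by a factor at most 1. -/

import Mathlib

open Matrix BigOperators

/-- An allocation rule is implementable-with-payments if there is a payment rule
making truthful reporting optimal. -/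
def Implementable {n : ℕ} (f : (Fin n → ℝ) → (Fin n → ℝ)) : Prop :=
  ∃ p : (Fin n → ℝ) → ℝ, ∀ θ θ' : Fin n → ℝ, f θ ⬝ᵥ θ - p θ ≥ f θ' ⬝ᵥ θ - p θ'

lemma dot_self_nonneg' {n : ℕ} (v : Fin n → ℝ) : 0 ≤ v ⬝ᵥ v :=
  Finset.sum_nonneg fun i _ => mul_self_nonneg (v i)

lemma dot_self_pos' {n : ℕ} {v : Fin n → ℝ} (hv : v ≠ 0) : 0 < v ⬝ᵥ v := by
  rcases lt_or_eq_of_le (dot_self_nonneg' v) with h | h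
  · exact h
  · exact absurd (dotProduct_self_eq_zero.mp h.symm) hv

/-- Two open halfspaces intersect unless the normals are nonpositive multiples. -/
lemma halfspace' {n : ℕ} (u u' : Fin n → ℝ) (hu : u ≠ 0)
    (h : ∀ c : ℝ, c ≤ 0 → u' ≠ c • u) :
    ∃ w : Fin n → ℝ, 0 < w ⬝ᵥ u ∧ 0 < w ⬝ᵥ u' := by
  have huu : 0 < u ⬝ᵥ u := dot_self_pos' hu
  set c : ℝ := (u' ⬝ᵥ u) / (u ⬝ᵥ u) with hc
  set z : Fin n → ℝ := u' - c • u with hz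
  have hzu : z ⬝ᵥ u = 0 := by
    rw [hz, sub_dotProduct, smul_dotProduct, hc, smul_eq_mul,
      div_mul_cancel₀ _ (ne_of_gt huu), sub_self]
  by_cases hz0 : z = 0
  · have hu' : u' = c • u := by rwa [hz, sub_eq_zero] at hz0
    have hcpos : 0 < c := by
      by_contra hcp
      exact h c (le_of_not_gt hcp) hu'
    refine ⟨u, huu, ?_⟩
    rw [hu', dotProduct_smul, smul_eq_mul]
    positivity
  · have hzz : 0 < z ⬝ᵥ z := dot_self_pos' hz0
    have hzu' : z ⬝ᵥ u' = z ⬝ᵥ z := by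
      have huz : u' = z + c • u := by rw [hz]; abel
      rw [huz, dotProduct_add, dotProduct_smul, hzu, smul_zero, add_zero]
    set m : ℝ := u ⬝ᵥ u' with hm
    set ε : ℝ := (z ⬝ᵥ z) / (2 * (1 + |m|)) with he
    have hεpos : 0 < ε := by
      apply div_pos hzz
      have := abs_nonneg m
      linarith
    refine ⟨z + ε • u, ?_, ?_⟩
    · rw [add_dotProduct, hzu, smul_dotProduct, smul_eq_mul]
      nlinarith
    · rw [add_dotProduct, hzu', smul_dotProduct, smul_eq_mul, ← hm]
      have habs : -|m| ≤ m := neg_abs_le m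
      have h0 : 0 ≤ |m| := abs_nonneg m
      have heq : ε * (2 * (1 + |m|)) = z ⬝ᵥ z := by
        rw [he]; field_simp
      nlinarith [mul_le_mul_of_nonneg_left habs (le_of_lt hεpos)]

/-- Theorem 5: with a zero-valued null assignment (allocations are sub-probability
vectors), for `n ≥ 2` and a type with pairwise distinct, nonzero coordinates, the
harmless set of all truthful-in-expectation mechanisms is `{λ • θ : λ ≤ 1}`. -/
theorem harmless_truthful_in_expectation_with_null {n : ℕ} (hn : 2 ≤ n)
    (θ : Fin n → ℝ) (hθ : ∀ i j : Fin n, i ≠ j → θ i ≠ θ j)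
    (hθ0 : ∀ i, θ i ≠ 0) :
    {θ' : Fin n → ℝ | ∀ f : (Fin n → ℝ) → (Fin n → ℝ),
        (∀ x, (∀ i, 0 ≤ f x i) ∧ (∑ i, f x i) ≤ 1) → Implementable f →
        f θ ⬝ᵥ θ ≥ f θ' ⬝ᵥ θ} =
    {θ' : Fin n → ℝ | ∃ l : ℝ, l ≤ 1 ∧ θ' = l • θ} := by
  ext θ'
  simp only [Set.mem_setOf_eq]
  constructor
  · -- hard direction
    intro h
    by_contra hcon
    push_neg at hcon
    have hθne : θ ≠ 0 := by
      intro h0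
      exact hθ0 ⟨0, by omega⟩ (by rw [h0]; rfl)
    obtain ⟨w, hw1, hw2⟩ := halfspace' θ (θ' - θ) hθne (by
      intro c hc heq
      refine hcon (1 + c) (by linarith) ?_
      funext i
      have h1 := congrFun heq i
      simp only [Pi.sub_apply, Pi.smul_apply, smul_eq_mul] at h1 ⊢
      linear_combination h1)
    have hwne : w ≠ 0 := by
      rintro rfl
      rw [zero_dotProduct] at hw1
      exact lt_irrefl 0 hw1
    obtain ⟨i0, hi0⟩ := Function.ne_iff.mp hwne
    set s : ℝ := ∑ i, |w i| with hs
    have hspos : 0 < s :=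
      Finset.sum_pos' (fun i _ => abs_nonneg _)
        ⟨i0, Finset.mem_univ i0, abs_pos.mpr hi0⟩
    set v : Fin n → ℝ := s⁻¹ • w with hv
    have hvθ : 0 < v ⬝ᵥ θ := by
      rw [hv, smul_dotProduct, smul_eq_mul]
      positivity
    have hvd : 0 < v ⬝ᵥ (θ' - θ) := by
      rw [hv, smul_dotProduct, smul_eq_mul]
      positivity
    have hvlt : v ⬝ᵥ θ < v ⬝ᵥ θ' := by
      rw [dotProduct_sub] at hvd
      linarith
    set a : Fin n → ℝ := fun i => max (v i) 0 with ha
    set b : Fin n → ℝ := fun i => max (-(v i)) 0 with hb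
    have hab : a - b = v := by
      funext i
      exact max_zero_sub_max_neg_zero_eq_self (v i)
    have hax : ∀ x : Fin n → ℝ, a ⬝ᵥ x = b ⬝ᵥ x + v ⬝ᵥ x := by
      intro x
      have := sub_dotProduct a b x
      rw [hab] at this
      linarith
    have hsumv : ∑ i, |v i| = 1 := by
      have : ∀ i, |v i| = s⁻¹ * |w i| := by
        intro i
        rw [hv, Pi.smul_apply, smul_eq_mul, abs_mul, abs_inv, abs_of_pos hspos]
      simp_rw [this]
      rw [← Finset.mul_sum, ← hs, inv_mul_cancel₀ (ne_of_gt hspos)]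
    have ha0 : ∀ i, 0 ≤ a i := fun i => le_max_right _ _
    have hb0 : ∀ i, 0 ≤ b i := fun i => le_max_right _ _
    have hasum : ∑ i, a i ≤ 1 := by
      rw [← hsumv]
      exact Finset.sum_le_sum fun i _ => max_le (le_abs_self _) (abs_nonneg _)
    have hbsum : ∑ i, b i ≤ 1 := by
      rw [← hsumv]
      exact Finset.sum_le_sum fun i _ =>
        max_le (neg_le_abs _) (abs_nonneg _)
    set d : ℝ := v ⬝ᵥ θ' with hd
    have key := h (fun x => if d ≤ v ⬝ᵥ x then a else b)
      (by
        intro x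
        by_cases hx : d ≤ v ⬝ᵥ x
        · rw [if_pos hx]; exact ⟨ha0, hasum⟩
        · rw [if_neg hx]; exact ⟨hb0, hbsum⟩)
      (by
        refine ⟨fun x => if d ≤ v ⬝ᵥ x then d else 0, fun x r => ?_⟩
        dsimp only
        by_cases hx : d ≤ v ⬝ᵥ x <;> by_cases hr : d ≤ v ⬝ᵥ r
        · simp only [if_pos hx, if_pos hr]
          exact le_refl _
        · simp only [if_pos hx, if_neg hr]
          have := hax x
          linarith
        · simp only [if_neg hx, if_pos hr]
          have := hax x
          have hx' : v ⬝ᵥ x < d := not_le.mp hx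
          linarith
        · simp only [if_neg hx, if_neg hr]
          exact le_refl _)
    rw [if_pos (le_refl d), if_neg (not_le.mpr hvlt)] at key
    have := hax θ
    linarith
  · -- easy direction
    rintro ⟨l, hl, rfl⟩ f hrange ⟨p, hp⟩
    have h1 := hp θ (l • θ)
    have h2 := hp (l • θ) θ
    rw [dotProduct_smul, dotProduct_smul, smul_eq_mul, smul_eq_mul] at h2
    rcases eq_or_lt_of_le hl with heq | hlt
    · subst heq
      rw [one_smul]
    · nlinarith [h1, h2]
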